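/- Assume [E : F] = 2 and d_i = 0 for every i ≥ 2, where d_i = dim_F(C_i ∩ L_1) (so L is thin and L_i = M_i as sets for every i ≥ 3). Let M³ = ⊕_{i ≥ 3} M_i, and let f : M³ → M³ be an F-linear map such that f(M_i) ⊆ M_i for every i ≥ 3 and f(⁅u, w⁆) = ⁅f(u), w⁆ for all u ∈ M³ and w ∈ L. Then there exists σ ∈ E such that f(u) = σ·u for all u ∈ M³. -/

import Mathlib

open Submodule

/-- The `i`-th two-step centraliser `C_i = {a ∈ M_1 | ⁅a, u⁆ = 0 for all u ∈ M_i}`. -/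
def twoStepCentraliser {E : Type*} [Field E] {M : Type*} [LieRing M] [LieAlgebra E M]
    (Mc : ℕ → Submodule E M) (i : ℕ) : Submodule E M where
  carrier := {a : M | a ∈ Mc 1 ∧ ∀ u ∈ Mc i, ⁅a, u⁆ = 0}
  add_mem' := by
    rintro a b ⟨ha1, ha2⟩ ⟨hb1, hb2⟩
    exact ⟨add_mem ha1 hb1, fun u hu => by rw [add_lie, ha2 u hu, hb2 u hu, add_zero]⟩
  zero_mem' := ⟨zero_mem _, fun u _ => zero_lie u⟩
  smul_mem' := by
    rintro c a ⟨ha1, ha2⟩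
    exact ⟨Submodule.smul_mem _ c ha1, fun u hu => by rw [smul_lie, ha2 u hu, smul_zero]⟩

/-- `Mc` is a grading of `M` as a graded Lie algebra of maximal class over `E`,
generated in degree 1. -/
structure IsMaximalClass (E : Type*) [Field E] (M : Type*) [LieRing M] [LieAlgebra E M]
    (Mc : ℕ → Submodule E M) : Prop where
  zero_bot : Mc 0 = ⊥
  internal : DirectSum.IsInternal Mc
  lie_mem : ∀ i j : ℕ, ∀ x ∈ Mc i, ∀ y ∈ Mc j, ⁅x, y⁆ ∈ Mc (i + j)
  finrank_one : Module.finrank E ↥(Mc 1) = 2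
  finrank_eq_one : ∀ i : ℕ, 2 ≤ i → Module.finrank E ↥(Mc i) = 1
  span_succ : ∀ i : ℕ, 1 ≤ i →
    Mc (i + 1) = Submodule.span E {z : M | ∃ v ∈ Mc i, ∃ a ∈ Mc 1, z = ⁅v, a⁆}

/-- The homogeneous components of the Lie `F`-subalgebra generated by `X` and `Y` in
degree 1:  `L_1 = span_F {X, Y}` and `L_{i+1} = span_F {⁅v, a⁆ : v ∈ L_i, a ∈ L_1}`. -/
def Lcomp (F : Type*) [Field F] {M : Type*} [LieRing M] [Module F M]
    (X Y : M) : ℕ → Submodule F M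
  | 0 => ⊥
  | 1 => Submodule.span F {X, Y}
  | (i + 2) => Submodule.span F
      {z : M | ∃ v ∈ Lcomp F X Y (i + 1), ∃ a ∈ Submodule.span F ({X, Y} : Set M), z = ⁅v, a⁆}

/-- `d_i = dim_F (C_i ∩ L_1)`. -/
noncomputable def dSeq (E : Type*) [Field E] {M : Type*} [LieRing M] [LieAlgebra E M]
    (Mc : ℕ → Submodule E M) (F : Type*) [Field F] [Algebra F E] [LieAlgebra F M]
    [IsScalarTower F E M] (X Y : M) (i : ℕ) : ℕ :=
  Module.finrank F
    ↥(Submodule.restrictScalars F (twoStepCentraliser Mc i) ⊓ Lcomp F X Y 1)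

/-- assume `[E : F] = 2` and `d_i = 0` for every `i ≥ 2` (so `L` is thin).
Let `M³ = ⊕_{i ≥ 3} M_i` and let `f : M³ → M³` be an `F`-linear map preserving each `M_i`
(`i ≥ 3`) and commuting with the adjoint action of `L`.  Then `f` is multiplication by
some scalar `σ ∈ E`. -/
theorem stmt_10 (E : Type*) [Field E] (M : Type*) [LieRing M] [LieAlgebra E M]
    (Mc : ℕ → Submodule E M) (hM : IsMaximalClass E M Mc)
    (F : Type*) [Field F] [Algebra F E] [LieAlgebra F M] [IsScalarTower F E M]
    (hEF : Module.finrank F E = 2)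
    (X Y : M) (hX : X ∈ Mc 1) (hY : Y ∈ Mc 1) (hXY : LinearIndependent E ![X, Y])
    (hd : ∀ i : ℕ, 2 ≤ i → dSeq E Mc F X Y i = 0)
    (M3 : Submodule F M)
    (hM3 : M3 = ⨆ i : ℕ, ⨆ _ : 3 ≤ i, Submodule.restrictScalars F (Mc i))
    (f : ↥M3 →ₗ[F] ↥M3)
    (hf1 : ∀ i : ℕ, 3 ≤ i → ∀ u : ↥M3, (u : M) ∈ Mc i → ((f u : M) ∈ Mc i))
    (hf2 : ∀ (u w : ↥M3) (t : M), t ∈ LieSubalgebra.lieSpan F M {X, Y} →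
      (w : M) = ⁅(u : M), t⁆ → (f w : M) = ⁅(f u : M), t⁆) :
    ∃ σ : E, ∀ u : ↥M3, (f u : M) = σ • (u : M) := by
  classical
  have hX0 : X ≠ 0 := by simpa using hXY.ne_zero 0
  have hXYF : LinearIndependent F ![X, Y] := by
    refine hXY.restrict_scalars ?_
    simp_rw [← Algebra.algebraMap_eq_smul_one]
    exact (algebraMap F E).injective
  -- every element of Mc i (i ≥ 2) is an E-multiple of a fixed nonzero element
  have hspan : ∀ i, 2 ≤ i → ∀ u ∈ Mc i, u ≠ 0 → ∀ w ∈ Mc i, ∃ c : E, w = c • u := by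
    intro i hi u hu hu0 w hw
    have h1 := hM.finrank_eq_one i hi
    have hne : (⟨u, hu⟩ : Mc i) ≠ 0 := by simpa using hu0
    obtain ⟨c, hc⟩ := (finrank_eq_one_iff_of_nonzero' (⟨u, hu⟩ : Mc i) hne).mp h1 ⟨w, hw⟩
    exact ⟨c, by simpa using (congrArg Subtype.val hc).symm⟩
  have hex : ∀ i, 2 ≤ i → ∃ u, u ∈ Mc i ∧ u ≠ 0 := by
    intro i hi
    apply Submodule.exists_mem_ne_zero_of_ne_bot
    intro h
    have h1 := hM.finrank_eq_one i hi
    rw [h] at h1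
    simp [finrank_bot] at h1
  -- the intersection is ⊥
  have hLc1 : Lcomp F X Y 1 = span F ({X, Y} : Set M) := rfl
  have hCbot : ∀ i, 2 ≤ i →
      (restrictScalars F (twoStepCentraliser Mc i) ⊓ Lcomp F X Y 1 : Submodule F M) = ⊥ := by
    intro i hi
    have hfin : FiniteDimensional F
        ↥(restrictScalars F (twoStepCentraliser Mc i) ⊓ Lcomp F X Y 1 : Submodule F M) := by
      have : FiniteDimensional F ↥(Lcomp F X Y 1) := by
        rw [hLc1]
        exact FiniteDimensional.span_of_finite F (Set.toFinite _)
      exact Submodule.finiteDimensional_of_le inf_le_right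
    have := hd i hi
    rw [dSeq] at this
    exact Submodule.finrank_eq_zero.mp this
  -- kernel triviality: s ∈ span_F{X,Y}, ⁅u,s⁆ = 0, u ≠ 0 in Mc i ⇒ s = 0
  have hker : ∀ i, 2 ≤ i → ∀ u ∈ Mc i, u ≠ 0 →
      ∀ s ∈ span F ({X, Y} : Set M), ⁅u, s⁆ = 0 → s = 0 := by
    intro i hi u hu hu0 s hs hls
    have hs1 : s ∈ Mc 1 := by
      have : span F ({X, Y} : Set M) ≤ restrictScalars F (Mc 1) := by
        rw [Submodule.span_le]
        rintro z (rfl | rfl)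
        · exact hX
        · exact hY
      exact this hs
    have hsc : s ∈ twoStepCentraliser Mc i := by
      refine ⟨hs1, fun u' hu' => ?_⟩
      obtain ⟨c, rfl⟩ := hspan i hi u hu hu0 u' hu'
      have : ⁅s, u⁆ = 0 := by
        rw [← lie_skew, hls]; exact neg_zero
      rw [lie_smul, this, smul_zero]
    have : s ∈ (restrictScalars F (twoStepCentraliser Mc i) ⊓ Lcomp F X Y 1 : Submodule F M) :=
      ⟨hsc, by rwa [hLc1]⟩
    rwa [hCbot i hi, Submodule.mem_bot] at this
  -- surjectivity: every w ∈ Mc (i+1) equals ⁅u, s⁆ for some s ∈ span F {X,Y}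
  have hsurj : ∀ i, 2 ≤ i → ∀ u ∈ Mc i, u ≠ 0 →
      ∀ w ∈ Mc (i + 1), ∃ s ∈ span F ({X, Y} : Set M), w = ⁅u, s⁆ := by
    intro i hi u hu hu0 w hw
    set z1 := ⁅u, X⁆ with hz1def
    set z2 := ⁅u, Y⁆ with hz2def
    have hz1 : z1 ∈ Mc (i + 1) := hM.lie_mem i 1 u hu X hX
    have hz2 : z2 ∈ Mc (i + 1) := hM.lie_mem i 1 u hu Y hY
    have hind : LinearIndependent F ![z1, z2] := by
      rw [LinearIndependent.pair_iff]
      intro a b hab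
      have hcomb : ⁅u, a • X + b • Y⁆ = 0 := by
        rw [lie_add, lie_smul, lie_smul]; exact hab
      have hmem : a • X + b • Y ∈ span F ({X, Y} : Set M) :=
        add_mem (smul_mem _ a (subset_span (by simp))) (smul_mem _ b (subset_span (by simp)))
      have h0 : a • X + b • Y = 0 := hker i hi u hu hu0 _ hmem hcomb
      exact (LinearIndependent.pair_iff.mp hXYF) a b h0
    -- W = span F {z1, z2} equals restrictScalars F (Mc (i+1))
    have hrange : Set.range ![z1, z2] = ({z1, z2} : Set M) := by
      simp [Matrix.range_cons, Matrix.range_empty, Set.pair_comm]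
    have hWrank : Module.finrank F ↥(span F ({z1, z2} : Set M)) = 2 := by
      rw [← hrange, finrank_span_eq_card hind]
      simp
    have hle : span F ({z1, z2} : Set M) ≤ restrictScalars F (Mc (i + 1)) := by
      rw [Submodule.span_le]
      rintro z (rfl | rfl)
      · exact hz1
      · exact hz2
    haveI : FiniteDimensional E ↥(Mc (i + 1)) :=
      FiniteDimensional.of_finrank_eq_succ (hM.finrank_eq_one (i + 1) (by omega))
    have hrk1 : Module.finrank E ↥(restrictScalars F (Mc (i + 1))) = 1 := by
      rw [(Submodule.restrictScalarsEquiv F E M (Mc (i + 1))).finrank_eq]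
      exact hM.finrank_eq_one (i + 1) (by omega)
    have hrk2 : Module.finrank F ↥(restrictScalars F (Mc (i + 1))) = 2 := by
      rw [← Module.finrank_mul_finrank F E ↥(restrictScalars F (Mc (i + 1))), hrk1, hEF]
    haveI : FiniteDimensional F ↥(restrictScalars F (Mc (i + 1))) :=
      FiniteDimensional.of_finrank_pos (by rw [hrk2]; norm_num)
    have hWeq : span F ({z1, z2} : Set M) = restrictScalars F (Mc (i + 1)) :=
      Submodule.eq_of_le_of_finrank_le hle (by rw [hrk2, hWrank])
    have hwW : w ∈ span F ({z1, z2} : Set M) := by rw [hWeq]; exact hw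
    obtain ⟨a, b, hab⟩ := Submodule.mem_span_pair.mp hwW
    refine ⟨a • X + b • Y,
      add_mem (smul_mem _ a (subset_span (by simp))) (smul_mem _ b (subset_span (by simp))), ?_⟩
    rw [lie_add, lie_smul, lie_smul, ← hz1def, ← hz2def, hab]
  -- span F {X,Y} ⊆ lieSpan
  have hsub : ∀ s ∈ span F ({X, Y} : Set M), s ∈ LieSubalgebra.lieSpan F M {X, Y} := by
    intro s hs
    have : span F ({X, Y} : Set M) ≤ (LieSubalgebra.lieSpan F M {X, Y}).toSubmodule := by
      rw [Submodule.span_le]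
      exact LieSubalgebra.subset_lieSpan
    exact this hs
  -- membership in M3
  have hmem3 : ∀ i, 3 ≤ i → ∀ x ∈ Mc i, x ∈ M3 := by
    intro i hi x hx
    rw [hM3]
    exact Submodule.mem_iSup_of_mem i (Submodule.mem_iSup_of_mem hi hx)
  -- choose u3 and σ
  obtain ⟨u3, hu3, hu30⟩ := hex 3 (by norm_num)
  have hu3M3 : u3 ∈ M3 := hmem3 3 le_rfl u3 hu3
  have hfu3 : (f ⟨u3, hu3M3⟩ : M) ∈ Mc 3 := hf1 3 le_rfl ⟨u3, hu3M3⟩ hu3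
  obtain ⟨σ, hσ⟩ := hspan 3 (by norm_num) u3 hu3 hu30 _ hfu3
  refine ⟨σ, ?_⟩
  set P : ℕ → Prop := fun i => ∀ u : ↥M3, (u : M) ∈ Mc i → (f u : M) = σ • (u : M) with hP
  -- step lemma
  have hstep : ∀ i, 2 ≤ i → ∀ u0 : ↥M3, (u0 : M) ∈ Mc i → (u0 : M) ≠ 0 →
      (f u0 : M) = σ • (u0 : M) → P (i + 1) := by
    intro i hi u0 hu0 hu00 hfu0 w hw
    obtain ⟨s, hs, hws⟩ := hsurj i hi u0 hu0 hu00 w hw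
    have h1 : (f w : M) = ⁅(f u0 : M), s⁆ := hf2 u0 w s (hsub s hs) hws
    rw [h1, hfu0, smul_lie, ← hws]
  have P4 : P 4 := hstep 3 (by norm_num) ⟨u3, hu3M3⟩ hu3 hu30 hσ
  have P3 : P 3 := by
    intro v hv
    have hbr : ⁅(v : M), X⁆ ∈ Mc 4 := hM.lie_mem 3 1 (v : M) hv X hX
    set w : ↥M3 := ⟨⁅(v : M), X⁆, hmem3 4 (by norm_num) _ hbr⟩ with hwdef
    have h1 : (f w : M) = ⁅(f v : M), X⁆ :=
      hf2 v w X (LieSubalgebra.subset_lieSpan (by simp)) rfl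
    have h2 : (f w : M) = σ • ⁅(v : M), X⁆ := P4 w hbr
    have hz : (f v : M) - σ • (v : M) ∈ Mc 3 :=
      sub_mem (hf1 3 le_rfl v hv) (Submodule.smul_mem _ σ hv)
    have hzX : ⁅(f v : M) - σ • (v : M), X⁆ = 0 := by
      rw [sub_lie, smul_lie, ← h1, h2, sub_self]
    by_contra hne
    have hz0 : (f v : M) - σ • (v : M) ≠ 0 := sub_ne_zero.mpr hne
    have hXC : X ∈ twoStepCentraliser Mc 3 := by
      refine ⟨hX, fun u' hu' => ?_⟩
      obtain ⟨c, rfl⟩ := hspan 3 (by norm_num) _ hz hz0 u' hu'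
      have : ⁅X, (f v : M) - σ • (v : M)⁆ = 0 := by
        rw [← lie_skew, hzX]; exact neg_zero
      rw [lie_smul, this, smul_zero]
    have : X ∈ (restrictScalars F (twoStepCentraliser Mc 3) ⊓ Lcomp F X Y 1 : Submodule F M) :=
      ⟨hXC, by rw [hLc1]; exact subset_span (by simp)⟩
    rw [hCbot 3 (by norm_num), Submodule.mem_bot] at this
    exact hX0 this
  have Pge4 : ∀ i, 4 ≤ i → P i := by
    intro i hi
    induction i, hi using Nat.le_induction with
    | base => exact P4
    | succ n hn ih =>
      obtain ⟨u0, hu0, hu00⟩ := hex n (by omega)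
      have hu0M3 : u0 ∈ M3 := hmem3 n (by omega) u0 hu0
      exact hstep n (by omega) ⟨u0, hu0M3⟩ hu0 hu00 (ih ⟨u0, hu0M3⟩ hu0)
  have Pall : ∀ i, 3 ≤ i → P i := by
    intro i hi
    rcases eq_or_lt_of_le hi with h | h
    · rw [← h]; exact P3
    · exact Pge4 i h
  -- final assembly via iSup induction
  have hM3' : M3 = ⨆ i : {i : ℕ // 3 ≤ i}, restrictScalars F (Mc i.1) := by
    rw [hM3, iSup_subtype]
  have key : ∀ (x : M) (hx : x ∈ ⨆ i : {i : ℕ // 3 ≤ i}, restrictScalars F (Mc i.1)),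
      ∀ (hxM : x ∈ M3), (f ⟨x, hxM⟩ : M) = σ • x := by
    intro x hx
    refine Submodule.iSup_induction' _
      (motive := fun y _ => ∀ (hyM : y ∈ M3), (f ⟨y, hyM⟩ : M) = σ • y)
      (fun i y hy hyM => Pall i.1 i.2 ⟨y, hyM⟩ hy) ?_ ?_ hx
    · intro h0M
      have : (⟨(0 : M), h0M⟩ : ↥M3) = 0 := rfl
      rw [this, map_zero, smul_zero]
      rfl
    · intro y z hy hz ihy ihz hyzM
      have hyM : y ∈ M3 := by rw [hM3']; exact hy
      have hzM : z ∈ M3 := by rw [hM3']; exact hz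
      have : (⟨y + z, hyzM⟩ : ↥M3) = ⟨y, hyM⟩ + ⟨z, hzM⟩ := rfl
      rw [this, map_add, Submodule.coe_add, ihy hyM, ihz hzM, smul_add]
  intro u
  have hu : (u : M) ∈ ⨆ i : {i : ℕ // 3 ≤ i}, restrictScalars F (Mc i.1) := by
    rw [← hM3']; exact u.2
  exact key (u : M) hu u.2
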